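/- Let G₁ and G₂ be finite simple graphs with n₁, m₁ and n₂, m₂ vertices and edges, and let ∅ ≠ U ⊆ V(G₂). Then F(G₁ Π G₂(U)) = |U|·F(G₁) + n₁F(G₂) + 3M₁(G₁)·Σ_{v∈U} d_{G₂}(v) + 6m₁·Σ_{v∈U} d_{G₂}(v)², where Π denotes the generalized hierarchical product. -/

import Mathlib

open Finset

/-- Degree of a vertex: the number of its neighbors. -/
noncomputable def degN {V : Type*} (G : SimpleGraph V) (v : V) : ℕ :=
  Nat.card (G.neighborSet v)

/-- F-index: the sum of cubes of the vertex degrees. -/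
noncomputable def Findex {V : Type*} [Fintype V] (G : SimpleGraph V) : ℕ :=
  ∑ v, (degN G v) ^ 3

/-- First Zagreb index: the sum of squares of the vertex degrees. -/
noncomputable def zagrebM1 {V : Type*} [Fintype V] (G : SimpleGraph V) : ℕ :=
  ∑ v, (degN G v) ^ 2

/-- Number of edges of a graph. -/
noncomputable def numEdges {V : Type*} (G : SimpleGraph V) : ℕ :=
  Nat.card G.edgeSet

/-- Generalized hierarchical product of two simple graphs with respect to a
set `U` of vertices of the second graph. -/
def graphHier {V₁ V₂ : Type*} (G₁ : SimpleGraph V₁) (G₂ : SimpleGraph V₂)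
    (U : Set V₂) : SimpleGraph (V₁ × V₂) where
  Adj x y := (x.1 = y.1 ∧ G₂.Adj x.2 y.2) ∨ (x.2 = y.2 ∧ x.2 ∈ U ∧ G₁.Adj x.1 y.1)
  symm := by
    constructor
    rintro ⟨a, b⟩ ⟨c, d⟩ (⟨h1, h2⟩ | ⟨h1, h2, h3⟩)
    · exact Or.inl ⟨h1.symm, h2.symm⟩
    · exact Or.inr ⟨h1.symm, h1 ▸ h2, h3.symm⟩
  loopless := by
    constructor
    rintro ⟨a, b⟩ (⟨_, h2⟩ | ⟨_, _, h3⟩)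
    · exact G₂.loopless.irrefl b h2
    · exact G₁.loopless.irrefl a h3

lemma hier_nbr_mem {V₁ V₂ : Type*} (G₁ : SimpleGraph V₁) (G₂ : SimpleGraph V₂)
    (U : Set V₂) (u : V₁) {v : V₂} (hv : v ∈ U) :
    (graphHier G₁ G₂ U).neighborSet (u, v) =
      (Prod.mk u '' G₂.neighborSet v) ∪ ((fun w => (w, v)) '' G₁.neighborSet u) := by
  ext ⟨a, b⟩
  constructor
  · rintro (⟨h1, h2⟩ | ⟨h1, _, h3⟩)
    · exact Or.inl ⟨b, h2, Prod.ext h1 rfl⟩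
    · exact Or.inr ⟨a, h3, Prod.ext rfl h1⟩
  · rintro (⟨w, hw, hab⟩ | ⟨w, hw, hab⟩)
    · obtain ⟨rfl, rfl⟩ := Prod.mk.injEq .. ▸ hab
      exact Or.inl ⟨rfl, hw⟩
    · obtain ⟨rfl, rfl⟩ := Prod.mk.injEq .. ▸ hab
      exact Or.inr ⟨rfl, hv, hw⟩

lemma hier_nbr_not_mem {V₁ V₂ : Type*} (G₁ : SimpleGraph V₁) (G₂ : SimpleGraph V₂)
    (U : Set V₂) (u : V₁) {v : V₂} (hv : v ∉ U) :
    (graphHier G₁ G₂ U).neighborSet (u, v) = Prod.mk u '' G₂.neighborSet v := by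
  ext ⟨a, b⟩
  constructor
  · rintro (⟨h1, h2⟩ | ⟨h1, h2, h3⟩)
    · exact ⟨b, h2, Prod.ext h1 rfl⟩
    · exact absurd h2 hv
  · rintro ⟨w, hw, hab⟩
    obtain ⟨rfl, rfl⟩ := Prod.mk.injEq .. ▸ hab
    exact Or.inl ⟨rfl, hw⟩

lemma sum_degN {V : Type*} [Fintype V] (G : SimpleGraph V) :
    ∑ v, degN G v = 2 * numEdges G := by
  classical
  have h : ∀ v, degN G v = G.degree v := fun v => by
    rw [degN, Nat.card_eq_fintype_card, SimpleGraph.card_neighborSet_eq_degree]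
  simp_rw [h]
  rw [SimpleGraph.sum_degrees_eq_twice_card_edges, numEdges, Nat.card_eq_fintype_card,
    SimpleGraph.edgeFinset, Set.toFinset_card]

lemma innerCubeSum {V : Type*} [Fintype V] (G : SimpleGraph V) (b : ℕ) :
    ∑ u, (degN G u + b) ^ 3 =
      Findex G + 3 * zagrebM1 G * b + 3 * (2 * numEdges G) * b ^ 2
        + Fintype.card V * b ^ 3 := by
  have e : ∀ u, (degN G u + b) ^ 3 =
      (degN G u) ^ 3 + 3 * (degN G u) ^ 2 * b + 3 * (degN G u) * b ^ 2 + b ^ 3 := by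
    intro u; ring
  simp_rw [e]
  rw [Finset.sum_add_distrib, Finset.sum_add_distrib, Finset.sum_add_distrib,
    Finset.sum_const, ← Finset.sum_mul, ← Finset.sum_mul, ← Finset.mul_sum,
    ← Finset.mul_sum, sum_degN]
  simp [Findex, zagrebM1, Finset.card_univ, mul_comm, mul_assoc, mul_left_comm]

open scoped Classical in
lemma hier_deg {V₁ V₂ : Type*} (G₁ : SimpleGraph V₁) (G₂ : SimpleGraph V₂)
    (U : Set V₂) (u : V₁) (v : V₂) [Finite V₁] [Finite V₂] :
    degN (graphHier G₁ G₂ U) (u, v) =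
      (if v ∈ U then degN G₁ u else 0) + degN G₂ v := by
  have h1 : Function.Injective (Prod.mk u : V₂ → V₁ × V₂) := fun a b h => by
    simpa using h
  have h2 : Function.Injective (fun w => (w, v) : V₁ → V₁ × V₂) := fun a b h => by
    simpa using h
  rw [degN, Nat.card_coe_set_eq]
  by_cases hv : v ∈ U
  · rw [if_pos hv, hier_nbr_mem G₁ G₂ U u hv,
      Set.ncard_union_eq ?_ (Set.toFinite _) (Set.toFinite _),
      Set.ncard_image_of_injective _ h1, Set.ncard_image_of_injective _ h2]
    · simp [degN, Nat.card_coe_set_eq, Nat.add_comm]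
    · rw [Set.disjoint_left]
      rintro ⟨a, b⟩ ⟨w, hw, hab⟩ ⟨w', hw', hab'⟩
      have ha : u = a := congrArg Prod.fst hab
      have hw'a : w' = a := congrArg Prod.fst hab'
      rw [hw'a, ← ha] at hw'
      exact G₁.loopless.irrefl u hw'
  · rw [if_neg hv, hier_nbr_not_mem G₁ G₂ U u hv, Set.ncard_image_of_injective _ h1]
    simp [degN, Nat.card_coe_set_eq]

theorem Findex_hier {V₁ V₂ : Type*} [Fintype V₁] [Fintype V₂]
    (G₁ : SimpleGraph V₁) (G₂ : SimpleGraph V₂)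
    (U : Finset V₂) (hU : U.Nonempty)
    (n₁ m₁ : ℕ) (hn₁ : Fintype.card V₁ = n₁) (hm₁ : numEdges G₁ = m₁) :
    Findex (graphHier G₁ G₂ (↑U : Set V₂)) =
      U.card * Findex G₁ + n₁ * Findex G₂
        + 3 * zagrebM1 G₁ * (∑ v ∈ U, degN G₂ v)
        + 6 * m₁ * (∑ v ∈ U, (degN G₂ v) ^ 2) := by
  classical
  have key : Findex (graphHier G₁ G₂ (↑U : Set V₂)) =
      ∑ v : V₂, ∑ u : V₁,
        ((if v ∈ U then degN G₁ u else 0) + degN G₂ v) ^ 3 := by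
    rw [Findex, Fintype.sum_prod_type, Finset.sum_comm]
    refine Finset.sum_congr rfl fun v _ => Finset.sum_congr rfl fun u _ => ?_
    rw [hier_deg]
    simp
  rw [key, ← Finset.sum_add_sum_compl U]
  have hu : ∀ v ∈ U, ∑ u : V₁, ((if v ∈ U then degN G₁ u else 0) + degN G₂ v) ^ 3 =
      Findex G₁ + 3 * zagrebM1 G₁ * degN G₂ v + 6 * m₁ * (degN G₂ v) ^ 2
        + n₁ * (degN G₂ v) ^ 3 := by
    intro v hv
    simp only [if_pos hv]
    rw [innerCubeSum, hm₁, hn₁]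
    ring
  have hnu : ∀ v ∈ Uᶜ, ∑ u : V₁, ((if v ∈ U then degN G₁ u else 0) + degN G₂ v) ^ 3 =
      n₁ * (degN G₂ v) ^ 3 := by
    intro v hv
    rw [Finset.mem_compl] at hv
    simp [if_neg hv, hn₁, mul_comm]
  rw [Finset.sum_congr rfl hu, Finset.sum_congr rfl hnu]
  have hF2 : Findex G₂ = ∑ v ∈ U, (degN G₂ v) ^ 3 + ∑ v ∈ Uᶜ, (degN G₂ v) ^ 3 :=
    (Finset.sum_add_sum_compl U _).symm
  rw [Finset.sum_add_distrib, Finset.sum_add_distrib, Finset.sum_add_distrib,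
    Finset.sum_const, ← Finset.mul_sum, ← Finset.mul_sum, ← Finset.mul_sum,
    ← Finset.mul_sum, hF2]
  ring
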